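/- arXiv:1412.2526 — 7 statements merged into one kernel-verified Lean document; each statement's English description precedes it below -/
import Mathlib

section
/- For every natural number n, there is no family of n+1 closed intervals of length 1 with pairwise disjoint interiors all contained in [0, n]. Formally: there is no function x : Fin (n+1) → ℝ such that for every i, 0 ≤ x i and x i + 1 ≤ n, and for all i ≠ j the open intervals (x i, x i + 1) and (x j, x j + 1) are disjoint. -/
theorem one_dim_pigeonhole (n : ℕ) :
    ¬ ∃ x : Fin (n + 1) → ℝ,
      (∀ i, 0 ≤ x i ∧ x i + 1 ≤ (n : ℝ)) ∧
      (∀ i j, i ≠ j →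
        Disjoint (Set.Ioo (x i) (x i + 1)) (Set.Ioo (x j) (x j + 1))) := by
  rintro ⟨x, hb, hd⟩
  have hmaps : ∀ i ∈ (Finset.univ : Finset (Fin (n+1))),
      ⌊x i⌋ ∈ Finset.Ico (0 : ℤ) n := by
    intro i _
    obtain ⟨h0, h1⟩ := hb i
    rw [Finset.mem_Ico]
    refine ⟨Int.le_floor.2 (by exact_mod_cast h0), ?_⟩
    have hx : x i ≤ (n : ℝ) - 1 := by linarith
    have h2 : ⌊x i⌋ ≤ ⌊(n : ℝ) - 1⌋ := Int.floor_le_floor hx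
    have hn : ⌊(n : ℝ) - 1⌋ = (n : ℤ) - 1 := by
      rw [show (n : ℝ) - 1 = ((n : ℤ) - 1 : ℤ) by push_cast; ring, Int.floor_intCast]
    omega
  have hcard : (Finset.Ico (0 : ℤ) n).card < (Finset.univ : Finset (Fin (n+1))).card := by
    simp [Int.card_Ico]
  obtain ⟨i, _, j, _, hij, hfl⟩ :=
    Finset.exists_ne_map_eq_of_card_lt_of_maps_to hcard hmaps
  -- wlog x i ≤ x j
  have key : ∀ a b : Fin (n+1), a ≠ b → ⌊x a⌋ = ⌊x b⌋ → x a ≤ x b → False := by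
    intro a b hab hfl hle
    have hdisj := hd a b hab
    have hlt : x b < x a + 1 := by
      have h1 : x b < ⌊x b⌋ + 1 := Int.lt_floor_add_one (x b)
      have h2 : (⌊x a⌋ : ℝ) ≤ x a := Int.floor_le (x a)
      rw [← hfl] at h1
      linarith
    -- pick a point in both intervals
    have hxa : x a < x b + 1 := by linarith
    set t := (max (x a) (x b) + x a + 1) / 2 with ht
    have h1 : x a < t := by
      have := le_max_left (x a) (x b)
      simp only [ht]; linarith
    have h2 : x b < t := by
      have := le_max_right (x a) (x b)
      simp only [ht]; linarith
    have h3 : t < x a + 1 := by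
      have : max (x a) (x b) < x a + 1 := max_lt (by linarith) hlt
      simp only [ht]; linarith
    have h4 : t < x b + 1 := by linarith
    exact Set.disjoint_left.1 hdisj ⟨h1, h3⟩ ⟨h2, h4⟩
  rcases le_total (x i) (x j) with h | h
  · exact key i j hij hfl h
  · exact key j i hij.symm hfl.symm h
end

section
/- Let 0 ≤ ε < 1 and n be a natural number. Let a, b ∈ ℝ³ be the lower corners of two axis-aligned unit cubes, each contained in the container [0, 1+ε] × [0, 1+ε] × [0, n]. If the interiors of the two cubes are disjoint, then the open intervals (a₃, a₃ + 1) and (b₃, b₃ + 1) (their projections onto the third axis) are disjoint. -/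
theorem disjoint_cubes_project_to_long_axis (ε : ℝ) (n : ℕ)
    (hε0 : 0 ≤ ε) (hε1 : ε < 1) (a b : Fin 3 → ℝ)
    (ha : (Set.univ.pi fun i => Set.Icc (a i) (a i + 1)) ⊆
      Set.univ.pi fun i => Set.Icc 0 (![1 + ε, 1 + ε, (n : ℝ)] i))
    (hb : (Set.univ.pi fun i => Set.Icc (b i) (b i + 1)) ⊆
      Set.univ.pi fun i => Set.Icc 0 (![1 + ε, 1 + ε, (n : ℝ)] i))
    (hdisj : Disjoint (Set.univ.pi fun i => Set.Ioo (a i) (a i + 1))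
      (Set.univ.pi fun i => Set.Ioo (b i) (b i + 1))) :
    Disjoint (Set.Ioo (a 2) (a 2 + 1)) (Set.Ioo (b 2) (b 2 + 1)) := by
  rw [Set.disjoint_left]
  intro t hta htb
  have haself : a ∈ Set.univ.pi fun i => Set.Icc 0 (![1 + ε, 1 + ε, (n : ℝ)] i) :=
    ha fun i _ => Set.mem_Icc.mpr ⟨le_refl _, by linarith⟩
  have hatop : (fun i => a i + 1) ∈ Set.univ.pi fun i => Set.Icc 0 (![1 + ε, 1 + ε, (n : ℝ)] i) :=
    ha fun i _ => Set.mem_Icc.mpr ⟨by linarith, le_refl _⟩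
  have hbself : b ∈ Set.univ.pi fun i => Set.Icc 0 (![1 + ε, 1 + ε, (n : ℝ)] i) :=
    hb fun i _ => Set.mem_Icc.mpr ⟨le_refl _, by linarith⟩
  have hbtop : (fun i => b i + 1) ∈ Set.univ.pi fun i => Set.Icc 0 (![1 + ε, 1 + ε, (n : ℝ)] i) :=
    hb fun i _ => Set.mem_Icc.mpr ⟨by linarith, le_refl _⟩
  have ha0 : 0 ≤ a 0 ∧ a 0 + 1 ≤ 1 + ε := ⟨(haself 0 trivial).1, (hatop 0 trivial).2⟩
  have ha1 : 0 ≤ a 1 ∧ a 1 + 1 ≤ 1 + ε := ⟨(haself 1 trivial).1, (hatop 1 trivial).2⟩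
  have hb0 : 0 ≤ b 0 ∧ b 0 + 1 ≤ 1 + ε := ⟨(hbself 0 trivial).1, (hbtop 0 trivial).2⟩
  have hb1 : 0 ≤ b 1 ∧ b 1 + 1 ≤ 1 + ε := ⟨(hbself 1 trivial).1, (hbtop 1 trivial).2⟩
  set m0 : ℝ := (max (a 0) (b 0) + min (a 0) (b 0) + 1) / 2 with hm0
  set m1 : ℝ := (max (a 1) (b 1) + min (a 1) (b 1) + 1) / 2 with hm1
  set x : Fin 3 → ℝ := ![m0, m1, t] with hx
  have mem : ∀ c : Fin 3 → ℝ,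
      min (a 0) (b 0) ≤ c 0 → c 0 ≤ max (a 0) (b 0) → c 0 ≤ ε →
      min (a 1) (b 1) ≤ c 1 → c 1 ≤ max (a 1) (b 1) → c 1 ≤ ε →
      t ∈ Set.Ioo (c 2) (c 2 + 1) →
      x ∈ Set.univ.pi fun i => Set.Ioo (c i) (c i + 1) := by
    intro c h0l h0u h0e h1l h1u h1e ht i _
    have n0z : (0:ℝ) ≤ min (a 0) (b 0) := le_min ha0.1 hb0.1
    have n1z : (0:ℝ) ≤ min (a 1) (b 1) := le_min ha1.1 hb1.1
    have m0e : max (a 0) (b 0) ≤ ε := max_le (by linarith [ha0.2]) (by linarith [hb0.2])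
    have m1e : max (a 1) (b 1) ≤ ε := max_le (by linarith [ha1.2]) (by linarith [hb1.2])
    fin_cases i <;>
      simp only [hx, Matrix.cons_val_zero, Matrix.cons_val_one, Matrix.head_cons,
        Fin.isValue, Matrix.cons_val_two, Matrix.tail_cons, Set.mem_Ioo]
    · exact ⟨show c 0 < m0 by rw [hm0]; linarith, show m0 < c 0 + 1 by rw [hm0]; linarith⟩
    · exact ⟨show c 1 < m1 by rw [hm1]; linarith, show m1 < c 1 + 1 by rw [hm1]; linarith⟩
    · exact ht
  have hxa : x ∈ Set.univ.pi fun i => Set.Ioo (a i) (a i + 1) :=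
    mem a (min_le_left _ _) (le_max_left _ _) (by linarith [ha0.2])
      (min_le_left _ _) (le_max_left _ _) (by linarith [ha1.2]) hta
  have hxb : x ∈ Set.univ.pi fun i => Set.Ioo (b i) (b i + 1) :=
    mem b (min_le_right _ _) (le_max_right _ _) (by linarith [hb0.2])
      (min_le_right _ _) (le_max_right _ _) (by linarith [hb1.2]) htb
  exact Set.disjoint_left.mp hdisj hxa hxb
end

section
/- Let 0 ≤ ε < 1 and n be a natural number. There is no family of n+1 axis-aligned unit cubes with pairwise disjoint interiors all contained in the container [0, 1+ε] × [0, 1+ε] × [0, n]. Formally: there is no function a : Fin (n+1) → ℝ³ such that for each i the unit cube with lower corner a i is contained in [0, 1+ε] × [0, 1+ε] × [0, n], and for all i ≠ j the interiors of the cubes at a i and a j are disjoint. -/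
theorem pigeon_infeasible (ε : ℝ) (n : ℕ) (hε0 : 0 ≤ ε) (hε1 : ε < 1) :
    ¬ ∃ a : Fin (n + 1) → (Fin 3 → ℝ),
      (∀ i, (Set.univ.pi fun k => Set.Icc (a i k) (a i k + 1)) ⊆
        Set.univ.pi fun k => Set.Icc 0 (![1 + ε, 1 + ε, (n : ℝ)] k)) ∧
      (∀ i j, i ≠ j →
        Disjoint (Set.univ.pi fun k => Set.Ioo (a i k) (a i k + 1))
          (Set.univ.pi fun k => Set.Ioo (a j k) (a j k + 1))) := by
  rintro ⟨a, hsub, hdisj⟩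
  have hlow : ∀ i k, 0 ≤ a i k := by
    intro i k
    have hm : a i ∈ Set.univ.pi fun k => Set.Icc (a i k) (a i k + 1) := by
      intro k _; exact ⟨le_refl _, by linarith⟩
    exact (hsub i hm k (Set.mem_univ k)).1
  have hhigh : ∀ i k, a i k + 1 ≤ ![1 + ε, 1 + ε, (n : ℝ)] k := by
    intro i k
    have hm : (fun k => a i k + 1) ∈ Set.univ.pi fun k => Set.Icc (a i k) (a i k + 1) := by
      intro k _; exact ⟨by simp, le_refl _⟩
    exact (hsub i hm k (Set.mem_univ k)).2
  have hz : Pairwise (Function.onFun Disjoint fun i => Set.Ioo (a i 2) (a i 2 + 1)) := by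
    intro i j hij
    rw [Function.onFun, Set.disjoint_left]
    intro t hti htj
    have hS : ∀ k : Fin 3,
        (Set.Ioo (max (a i k) (a j k)) (min (a i k + 1) (a j k + 1))).Nonempty := by
      intro k
      rcases eq_or_ne k 2 with hk | hk
      · subst hk
        exact ⟨t, max_lt hti.1 htj.1, lt_min hti.2 htj.2⟩
      · have hik : a i k + 1 ≤ 1 + ε := by
          have := hhigh i k
          fin_cases k <;> simp_all
        have hjk : a j k + 1 ≤ 1 + ε := by
          have := hhigh j k
          fin_cases k <;> simp_all
        have h1 := hlow i k
        have h2 := hlow j k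
        refine Set.nonempty_Ioo.mpr ?_
        rw [max_lt_iff, lt_min_iff, lt_min_iff]
        exact ⟨⟨by linarith, by linarith⟩, by linarith, by linarith⟩
    have hx : (fun k => (hS k).choose) ∈
        (Set.univ.pi fun k => Set.Ioo (a i k) (a i k + 1)) ∩
        (Set.univ.pi fun k => Set.Ioo (a j k) (a j k + 1)) := by
      constructor <;> intro k _ <;>
        obtain ⟨h1, h2⟩ := (hS k).choose_spec
      · exact ⟨lt_of_le_of_lt (le_max_left _ _) h1, lt_of_lt_of_le h2 (min_le_left _ _)⟩
      · exact ⟨lt_of_le_of_lt (le_max_right _ _) h1, lt_of_lt_of_le h2 (min_le_right _ _)⟩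
    exact Set.disjoint_left.mp (hdisj i j hij) hx.1 hx.2
  have hmeas := MeasureTheory.measure_iUnion (μ := MeasureTheory.volume) hz
    (fun i => measurableSet_Ioo)
  have hsubz : (⋃ i, Set.Ioo (a i 2) (a i 2 + 1)) ⊆ Set.Icc (0 : ℝ) n := by
    rintro x hx
    simp only [Set.mem_iUnion] at hx
    obtain ⟨i, hx1, hx2⟩ := hx
    have h1 := hlow i 2
    have h2 : a i 2 + 1 ≤ (n : ℝ) := by simpa using hhigh i 2
    exact ⟨by linarith, by linarith⟩
  have hle := MeasureTheory.measure_mono (μ := MeasureTheory.volume) hsubz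
  rw [hmeas] at hle
  simp only [Real.volume_Ioo, Real.volume_Icc, add_sub_cancel_left, sub_zero,
    ENNReal.ofReal_one, tsum_fintype, Finset.sum_const, Finset.card_univ,
    Fintype.card_fin, nsmul_eq_mul, mul_one] at hle
  rw [ENNReal.ofReal_natCast] at hle
  exact absurd hle (by exact_mod_cast Nat.not_succ_le_self n)
end

section
/- Let 0 ≤ ε < 1 and n ≥ 1. The maximum number of axis-aligned unit cubes with pairwise disjoint interiors that can be contained in the container [0, 1+ε] × [0, 1+ε] × [0, n] is exactly n: there exists a family of n such cubes with pairwise disjoint interiors all contained in the container, and there is no such family of n+1 cubes. -/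
/-- If two open unit boxes overlap in every coordinate, they are not disjoint. -/
lemma boxes_overlap (a b : Fin 3 → ℝ) (h : ∀ k, |a k - b k| < 1) :
    ¬ Disjoint (Set.univ.pi fun k => Set.Ioo (a k) (a k + 1))
      (Set.univ.pi fun k => Set.Ioo (b k) (b k + 1)) := by
  intro hd
  set x : Fin 3 → ℝ := fun k => (max (a k) (b k) + min (a k) (b k) + 1) / 2 with hx
  have hxa : x ∈ Set.univ.pi fun k => Set.Ioo (a k) (a k + 1) := by
    intro k _
    have h1 := abs_sub_lt_iff.mp (h k)
    constructor
    · simp only [hx]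
      have : a k ≤ max (a k) (b k) := le_max_left _ _
      have h2 : a k - 1 < min (a k) (b k) := by
        rcases min_cases (a k) (b k) with ⟨he, _⟩ | ⟨he, _⟩ <;> rw [he] <;> linarith [h1.1, h1.2]
      linarith
    · simp only [hx]
      have : min (a k) (b k) ≤ a k := min_le_left _ _
      have h2 : max (a k) (b k) < a k + 1 := by
        rcases max_cases (a k) (b k) with ⟨he, _⟩ | ⟨he, _⟩ <;> rw [he] <;> linarith [h1.1, h1.2]
      linarith
  have hxb : x ∈ Set.univ.pi fun k => Set.Ioo (b k) (b k + 1) := by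
    intro k _
    have h1 := abs_sub_lt_iff.mp (h k)
    constructor
    · simp only [hx]
      have : b k ≤ max (a k) (b k) := le_max_right _ _
      have h2 : b k - 1 < min (a k) (b k) := by
        rcases min_cases (a k) (b k) with ⟨he, _⟩ | ⟨he, _⟩ <;> rw [he] <;> linarith [h1.1, h1.2]
      linarith
    · simp only [hx]
      have : min (a k) (b k) ≤ b k := min_le_right _ _
      have h2 : max (a k) (b k) < b k + 1 := by
        rcases max_cases (a k) (b k) with ⟨he, _⟩ | ⟨he, _⟩ <;> rw [he] <;> linarith [h1.1, h1.2]
      linarith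
  exact Set.disjoint_left.mp hd hxa hxb

theorem pigeon_optimum (ε : ℝ) (n : ℕ) (hε0 : 0 ≤ ε) (hε1 : ε < 1) (hn : 1 ≤ n) :
    (∃ a : Fin n → (Fin 3 → ℝ),
      (∀ i, (Set.univ.pi fun k => Set.Icc (a i k) (a i k + 1)) ⊆
        Set.univ.pi fun k => Set.Icc 0 (![1 + ε, 1 + ε, (n : ℝ)] k)) ∧
      (∀ i j, i ≠ j →
        Disjoint (Set.univ.pi fun k => Set.Ioo (a i k) (a i k + 1))
          (Set.univ.pi fun k => Set.Ioo (a j k) (a j k + 1)))) ∧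
    ¬ ∃ a : Fin (n + 1) → (Fin 3 → ℝ),
      (∀ i, (Set.univ.pi fun k => Set.Icc (a i k) (a i k + 1)) ⊆
        Set.univ.pi fun k => Set.Icc 0 (![1 + ε, 1 + ε, (n : ℝ)] k)) ∧
      (∀ i j, i ≠ j →
        Disjoint (Set.univ.pi fun k => Set.Ioo (a i k) (a i k + 1))
          (Set.univ.pi fun k => Set.Ioo (a j k) (a j k + 1))) := by
  constructor
  · -- existence: stack cubes
    refine ⟨fun i => ![0, 0, (i : ℝ)], ?_, ?_⟩
    · intro i x hx k _
      have h0 := hx 0 (Set.mem_univ 0)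
      have h1 := hx 1 (Set.mem_univ 1)
      have h2 := hx 2 (Set.mem_univ 2)
      simp only [Matrix.cons_val_zero, Matrix.cons_val_one, Matrix.head_cons,
        Matrix.cons_val_two, Matrix.tail_cons, Set.mem_Icc] at h0 h1 h2
      fin_cases k
      · show x 0 ∈ Set.Icc (0:ℝ) (1 + ε)
        exact ⟨by linarith [h0.1], by linarith [h0.2]⟩
      · show x 1 ∈ Set.Icc (0:ℝ) (1 + ε)
        exact ⟨by linarith [h1.1], by linarith [h1.2]⟩
      · show x 2 ∈ Set.Icc (0:ℝ) (n:ℝ)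
        have hnn : (0:ℝ) ≤ (i : ℝ) := Nat.cast_nonneg _
        have hub : (i : ℝ) + 1 ≤ n := by exact_mod_cast i.isLt
        exact ⟨by linarith [h2.1], by linarith [h2.2]⟩
    · intro i j hij
      rw [Set.disjoint_left]
      intro x hxi hxj
      have h2i := hxi 2 (Set.mem_univ _)
      have h2j := hxj 2 (Set.mem_univ _)
      simp only [Matrix.cons_val_two, Matrix.tail_cons, Matrix.head_cons] at h2i h2j
      have hij' : (i : ℕ) ≠ (j : ℕ) := fun h => hij (Fin.ext h)
      rcases hij'.lt_or_gt with h | h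
      · have : ((i : ℕ) : ℝ) + 1 ≤ ((j : ℕ) : ℝ) := by exact_mod_cast h
        linarith [h2i.2, h2j.1]
      · have : ((j : ℕ) : ℝ) + 1 ≤ ((i : ℕ) : ℝ) := by exact_mod_cast h
        linarith [h2j.2, h2i.1]
  · -- impossibility
    rintro ⟨a, hc, hd⟩
    -- bounds for each cube
    have hb : ∀ i : Fin (n + 1), ∀ k : Fin 3,
        0 ≤ a i k ∧ a i k + 1 ≤ ![1 + ε, 1 + ε, (n : ℝ)] k := by
      intro i k
      have hmemL : a i ∈ Set.univ.pi fun k => Set.Icc (a i k) (a i k + 1) := by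
        intro k _; exact ⟨le_refl _, by linarith⟩
      have hmemR : (fun k => a i k + 1) ∈ Set.univ.pi fun k => Set.Icc (a i k) (a i k + 1) := by
        intro k _
        refine ⟨?_, le_refl _⟩
        show a i k ≤ a i k + 1
        linarith
      exact ⟨(hc i hmemL k (Set.mem_univ k)).1, (hc i hmemR k (Set.mem_univ k)).2⟩
    -- pigeonhole on floor of z-coordinate
    have hfl : ∀ i : Fin (n + 1), ⌊a i 2⌋₊ < n := by
      intro i
      have h1 := (hb i 2).1
      have h2 := (hb i 2).2
      simp only [Matrix.cons_val_two, Matrix.tail_cons, Matrix.head_cons] at h2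
      have : a i 2 ≤ ((n - 1 : ℕ) : ℝ) := by
        have : ((n - 1 : ℕ) : ℝ) = (n : ℝ) - 1 := by
          have : (1:ℕ) ≤ n := hn
          push_cast [Nat.cast_sub this]; ring
        linarith [this]
      calc ⌊a i 2⌋₊ ≤ ⌊((n - 1 : ℕ) : ℝ)⌋₊ := Nat.floor_le_floor this
        _ = n - 1 := Nat.floor_natCast _
        _ < n := Nat.sub_lt hn one_pos
    obtain ⟨i, j, hij, hfeq⟩ :=
      Fintype.exists_ne_map_eq_of_card_lt (fun i : Fin (n+1) => (⟨⌊a i 2⌋₊, hfl i⟩ : Fin n))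
        (by simp)
    apply boxes_overlap (a i) (a j) _ (hd i j hij)
    intro k
    fin_cases k
    · show |a i 0 - a j 0| < 1
      rw [abs_sub_lt_iff]
      have h1 := hb i 0; have h2 := hb j 0
      simp only [Matrix.cons_val_zero] at h1 h2
      constructor <;> linarith [h1.1, h1.2, h2.1, h2.2]
    · show |a i 1 - a j 1| < 1
      rw [abs_sub_lt_iff]
      have h1 := hb i 1; have h2 := hb j 1
      simp only [Matrix.cons_val_one, Matrix.head_cons, Matrix.cons_val_zero] at h1 h2
      constructor <;> linarith [h1.1, h1.2, h2.1, h2.2]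
    · show |a i 2 - a j 2| < 1
      rw [abs_sub_lt_iff]
      have hfq : ⌊a i 2⌋₊ = ⌊a j 2⌋₊ := by
        have := congrArg Fin.val hfeq; simpa using this
      have hi1 : (⌊a i 2⌋₊ : ℝ) ≤ a i 2 := Nat.floor_le (hb i 2).1
      have hi2 : a i 2 < ⌊a i 2⌋₊ + 1 := Nat.lt_floor_add_one _
      have hj1 : (⌊a j 2⌋₊ : ℝ) ≤ a j 2 := Nat.floor_le (hb j 2).1
      have hj2 : a j 2 < ⌊a j 2⌋₊ + 1 := Nat.lt_floor_add_one _
      rw [hfq] at hi1 hi2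
      constructor <;> linarith
end

section
/- Let n ≥ 1, let l : Fin n → ℝ with l i > 0 for each i, let D ≥ 0, and let x : Fin n → ℝ satisfy 0 ≤ x i and x i + l i ≤ D for each i, with the open intervals (x i, x i + l i) pairwise disjoint for distinct indices. Then there exists x' : Fin n → ℝ such that: (1) 0 ≤ x' i ≤ x i for each i (hence x' i + l i ≤ D); (2) the open intervals (x' i, x' i + l i) are pairwise disjoint for distinct indices; and (3) for each i there is a subset S ⊆ Fin n with i ∉ S and x' i = ∑_{j ∈ S} l j. -/
theorem one_dim_normal_pattern (n : ℕ) (hn : 1 ≤ n) (l : Fin n → ℝ)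
    (hl : ∀ i, 0 < l i) (D : ℝ) (hD : 0 ≤ D) (x : Fin n → ℝ)
    (hx0 : ∀ i, 0 ≤ x i) (hxD : ∀ i, x i + l i ≤ D)
    (hdisj : ∀ i j, i ≠ j →
      Disjoint (Set.Ioo (x i) (x i + l i)) (Set.Ioo (x j) (x j + l j))) :
    ∃ x' : Fin n → ℝ,
      (∀ i, 0 ≤ x' i ∧ x' i ≤ x i) ∧
      (∀ i j, i ≠ j →
        Disjoint (Set.Ioo (x' i) (x' i + l i)) (Set.Ioo (x' j) (x' j + l j))) ∧
      (∀ i, ∃ S : Finset (Fin n), i ∉ S ∧ x' i = ∑ j ∈ S, l j) := by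
  classical
  set σ := Tuple.sort x with hσdef
  have hmono : Monotone (x ∘ σ) := Tuple.monotone_sort x
  -- key: among sorted intervals, earlier ones end before later ones start
  have key : ∀ m k : Fin n, m < k → x (σ m) + l (σ m) ≤ x (σ k) := by
    intro m k hmk
    by_contra h
    push_neg at h
    have hne : σ m ≠ σ k := fun e => absurd (σ.injective e) (ne_of_lt hmk)
    have hd := hdisj _ _ hne
    have hle : x (σ m) ≤ x (σ k) := hmono hmk.le
    set t := (x (σ k) + min (x (σ m) + l (σ m)) (x (σ k) + l (σ k))) / 2 with ht
    have hmin : x (σ k) < min (x (σ m) + l (σ m)) (x (σ k) + l (σ k)) :=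
      lt_min h (by linarith [hl (σ k)])
    have h1 : x (σ k) < t := by rw [ht]; linarith
    have h2 : t < min (x (σ m) + l (σ m)) (x (σ k) + l (σ k)) := by rw [ht]; linarith
    have hm1 := lt_of_lt_of_le h2 (min_le_left _ _)
    have hm2 := lt_of_lt_of_le h2 (min_le_right _ _)
    exact Set.disjoint_left.mp hd ⟨lt_of_le_of_lt hle h1, hm1⟩ ⟨h1, hm2⟩
  set y : Fin n → ℝ := fun k => ∑ m ∈ Finset.Iio k, l (σ m) with hy
  -- y k + current length ≤ y of any later one
  have hstep : ∀ m k : Fin n, m < k → y m + l (σ m) ≤ y k := by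
    intro m k hmk
    have h1 : y m + l (σ m) = ∑ j ∈ Finset.Iic m, l (σ j) := by
      show (∑ j ∈ Finset.Iio m, l (σ j)) + l (σ m) = _
      rw [← Finset.Iio_insert, Finset.sum_insert (by simp)]
      ring
    rw [h1]
    show _ ≤ ∑ j ∈ Finset.Iio k, l (σ j)
    apply Finset.sum_le_sum_of_subset_of_nonneg
    · intro j hj
      simp only [Finset.mem_Iic] at hj
      simp only [Finset.mem_Iio]
      exact lt_of_le_of_lt hj hmk
    · intro j _ _; exact (hl _).le
  -- y k ≤ x (σ k)
  have hyleN : ∀ N : ℕ, ∀ k : Fin n, k.val = N → y k ≤ x (σ k) := by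
    intro N
    induction N with
    | zero =>
      intro k h0
      have : Finset.Iio k = ∅ := by
        ext j; simp only [Finset.mem_Iio, Finset.notMem_empty, iff_false]
        intro hj
        exact absurd hj (by simp [Fin.lt_def, h0])
      simp [hy, this, hx0]
    | succ N ih =>
      intro k hk
      have hk1 : N < n := by omega
      set m : Fin n := ⟨N, hk1⟩ with hm
      have hmk : m < k := by simp [Fin.lt_def, hm]; omega
      have hIic : Finset.Iio k = Finset.Iic m := by
        ext j
        simp only [Finset.mem_Iio, Finset.mem_Iic, Fin.lt_def, Fin.le_def, hm]
        omega
      have hyk : y k = y m + l (σ m) := by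
        show (∑ j ∈ Finset.Iio k, l (σ j)) = (∑ j ∈ Finset.Iio m, l (σ j)) + l (σ m)
        rw [hIic, ← Finset.Iio_insert, Finset.sum_insert (by simp)]; ring
      rw [hyk]
      calc y m + l (σ m) ≤ x (σ m) + l (σ m) := by linarith [ih m rfl]
        _ ≤ x (σ k) := key m k hmk
  have hyle : ∀ k : Fin n, y k ≤ x (σ k) := fun k => hyleN k.val k rfl
  refine ⟨fun i => y (σ.symm i), ?_, ?_, ?_⟩
  · intro i
    constructor
    · exact Finset.sum_nonneg fun j _ => (hl _).le
    · have := hyle (σ.symm i)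
      simpa using this
  · intro i j hij
    have hne : σ.symm i ≠ σ.symm j := fun e => hij (by simpa using congrArg σ e)
    have main : ∀ a b : Fin n, a < b →
        Disjoint (Set.Ioo (y a) (y a + l (σ a))) (Set.Ioo (y b) (y b + l (σ b))) := by
      intro a b hab
      rw [Set.disjoint_left]
      intro t ht ht'
      have := hstep a b hab
      have := ht.2
      have := ht'.1
      linarith
    rcases lt_or_gt_of_ne hne with h | h
    · have := main _ _ h
      simpa using this
    · have := (main _ _ h).symm
      simpa using this
  · intro i
    refine ⟨(Finset.Iio (σ.symm i)).image σ, ?_, ?_⟩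
    · intro hmem
      simp only [Finset.mem_image] at hmem
      obtain ⟨m, hm, hme⟩ := hmem
      have : m = σ.symm i := by
        apply σ.injective; simpa using hme
      rw [this] at hm
      exact absurd hm (by simp)
    · rw [Finset.sum_image (fun a _ b _ h => σ.injective h)]
end

section
/- Let n ≥ 1, let D ∈ ℝ³ have all coordinates positive, let L : Fin n → ℝ³ assign to each box positive side lengths, and let a : Fin n → ℝ³ be lower corners such that each box ∏_H [a(i)_H, a(i)_H + L(i)_H] is contained in the container [0, D₁] × [0, D₂] × [0, D₃] and the interiors of distinct boxes are pairwise disjoint. Then there exist lower corners a' : Fin n → ℝ³ such that: (1) 0 ≤ a'(i)_H ≤ a(i)_H for each i and each axis H; (2) each box ∏_H [a'(i)_H, a'(i)_H + L(i)_H] is contained in the container and the interiors of distinct boxes are pairwise disjoint; and (3) for each i and each axis H there is a subset S ⊆ Fin n with i ∉ S and a'(i)_H = ∑_{j ∈ S} L(j)_H. -/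
open Set Finset

/-- Two open boxes are disjoint iff they are separated along some axis. -/
lemma box_disjoint_iff' {ι : Type*} [Fintype ι] (u v u' v' : ι → ℝ)
    (h : ∀ k, u k < v k) (h' : ∀ k, u' k < v' k) :
    Disjoint (Set.univ.pi fun k => Set.Ioo (u k) (v k))
      (Set.univ.pi fun k => Set.Ioo (u' k) (v' k)) ↔ ∃ k, v k ≤ u' k ∨ v' k ≤ u k := by
  constructor
  · intro hd
    by_contra hc
    push_neg at hc
    have hmm : ∀ k, max (u k) (u' k) < min (v k) (v' k) := by
      intro k
      rcases hc k with ⟨h1, h2⟩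
      simp only [max_lt_iff, lt_min_iff]
      exact ⟨⟨h k, h1⟩, ⟨h2, h' k⟩⟩
    set x : ι → ℝ := fun k => (max (u k) (u' k) + min (v k) (v' k)) / 2 with hx
    have hx1 : x ∈ Set.univ.pi fun k => Set.Ioo (u k) (v k) := by
      intro k _
      have h1 := hmm k
      have h2 : u k ≤ max (u k) (u' k) := le_max_left _ _
      have h3 : min (v k) (v' k) ≤ v k := min_le_left _ _
      constructor <;> (simp only [hx]; linarith)
    have hx2 : x ∈ Set.univ.pi fun k => Set.Ioo (u' k) (v' k) := by
      intro k _
      have h1 := hmm k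
      have h2 : u' k ≤ max (u k) (u' k) := le_max_right _ _
      have h3 : min (v k) (v' k) ≤ v' k := min_le_right _ _
      constructor <;> (simp only [hx]; linarith)
    exact Set.disjoint_left.1 hd hx1 hx2
  · rintro ⟨k, hk⟩
    rw [Set.disjoint_left]
    intro x hx hx'
    have h1 := hx k (Set.mem_univ k)
    have h2 := hx' k (Set.mem_univ k)
    simp only [Set.mem_Ioo] at h1 h2
    rcases hk with hk | hk <;> linarith [h1.1, h1.2, h2.1, h2.2]

theorem three_dim_normal_pattern (n : ℕ) (hn : 1 ≤ n) (D : Fin 3 → ℝ)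
    (hD : ∀ k, 0 < D k) (L : Fin n → Fin 3 → ℝ) (hL : ∀ i k, 0 < L i k)
    (a : Fin n → Fin 3 → ℝ)
    (hcont : ∀ i, (Set.univ.pi fun k => Set.Icc (a i k) (a i k + L i k)) ⊆
      Set.univ.pi fun k => Set.Icc 0 (D k))
    (hdisj : ∀ i j, i ≠ j →
      Disjoint (Set.univ.pi fun k => Set.Ioo (a i k) (a i k + L i k))
        (Set.univ.pi fun k => Set.Ioo (a j k) (a j k + L j k))) :
    ∃ a' : Fin n → Fin 3 → ℝ,
      (∀ i k, 0 ≤ a' i k ∧ a' i k ≤ a i k) ∧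
      (∀ i, (Set.univ.pi fun k => Set.Icc (a' i k) (a' i k + L i k)) ⊆
        Set.univ.pi fun k => Set.Icc 0 (D k)) ∧
      (∀ i j, i ≠ j →
        Disjoint (Set.univ.pi fun k => Set.Ioo (a' i k) (a' i k + L i k))
          (Set.univ.pi fun k => Set.Ioo (a' j k) (a' j k + L j k))) ∧
      (∀ i k, ∃ S : Finset (Fin n), i ∉ S ∧ a' i k = ∑ j ∈ S, L j k) := by
  haveI : Nonempty (Fin n) := ⟨⟨0, hn⟩⟩
  -- basic bounds
  have ha0 : ∀ i k, 0 ≤ a i k := by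
    intro i k
    have hmem : (a i) ∈ Set.univ.pi fun k => Set.Icc (a i k) (a i k + L i k) := by
      intro k _; exact ⟨le_refl _, by linarith [hL i k]⟩
    exact ((hcont i hmem) k (Set.mem_univ k)).1
  have haD : ∀ i k, a i k + L i k ≤ D k := by
    intro i k
    have hmem : (fun k => a i k + L i k) ∈
        Set.univ.pi fun k => Set.Icc (a i k) (a i k + L i k) := by
      intro k _
      simp only [Set.mem_Icc]
      constructor <;> linarith [hL i k]
    exact ((hcont i hmem) k (Set.mem_univ k)).2
  -- feasible set
  set F : Set (Fin n → Fin 3 → ℝ) :=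
    {x | (∀ i k, x i k ∈ Set.Icc 0 (a i k)) ∧
      ∀ i j, i ≠ j → ∃ k, x i k + L i k ≤ x j k ∨ x j k + L j k ≤ x i k} with hFdef
  have hcontap : ∀ (i : Fin n) (k : Fin 3),
      Continuous fun x : Fin n → Fin 3 → ℝ => x i k :=
    fun i k => (continuous_apply k).comp (continuous_apply i)
  have hF1 : IsClosed {x : Fin n → Fin 3 → ℝ | ∀ i k, x i k ∈ Set.Icc 0 (a i k)} := by
    have : {x : Fin n → Fin 3 → ℝ | ∀ i k, x i k ∈ Set.Icc 0 (a i k)} =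
        ⋂ i, ⋂ k, (fun x : Fin n → Fin 3 → ℝ => x i k) ⁻¹' Set.Icc 0 (a i k) := by
      ext x; simp [Set.mem_iInter]
    rw [this]
    exact isClosed_iInter fun i => isClosed_iInter fun k =>
      (isClosed_Icc).preimage (hcontap i k)
  have hF2 : IsClosed {x : Fin n → Fin 3 → ℝ |
      ∀ i j, i ≠ j → ∃ k, x i k + L i k ≤ x j k ∨ x j k + L j k ≤ x i k} := by
    have : {x : Fin n → Fin 3 → ℝ |
        ∀ i j, i ≠ j → ∃ k, x i k + L i k ≤ x j k ∨ x j k + L j k ≤ x i k} =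
        ⋂ i, ⋂ j, ⋂ (_ : i ≠ j), ⋃ k,
          ({x : Fin n → Fin 3 → ℝ | x i k + L i k ≤ x j k} ∪
           {x : Fin n → Fin 3 → ℝ | x j k + L j k ≤ x i k}) := by
      ext x; simp [Set.mem_iInter, Set.mem_iUnion]
    rw [this]
    refine isClosed_iInter fun i => isClosed_iInter fun j => isClosed_iInter fun _ =>
      isClosed_iUnion_of_finite fun k => IsClosed.union ?_ ?_
    · exact isClosed_le ((hcontap i k).add continuous_const) (hcontap j k)
    · exact isClosed_le ((hcontap j k).add continuous_const) (hcontap i k)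
  have hFclosed : IsClosed F := hF1.inter hF2
  have hFsub : F ⊆ Set.univ.pi fun i => Set.univ.pi fun k => Set.Icc 0 (a i k) := by
    intro x hx i _
    intro k _
    exact hx.1 i k
  have hKcomp : IsCompact (Set.univ.pi fun i : Fin n =>
      Set.univ.pi fun k : Fin 3 => Set.Icc 0 (a i k)) :=
    isCompact_univ_pi fun i => isCompact_univ_pi fun k => isCompact_Icc
  have hFcomp : IsCompact F := hKcomp.of_isClosed_subset hFclosed hFsub
  have haF : a ∈ F := by
    constructor
    · intro i k; exact ⟨ha0 i k, le_refl _⟩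
    · intro i j hij
      exact (box_disjoint_iff' (a i) (fun k => a i k + L i k) (a j)
        (fun k => a j k + L j k)
        (fun k => show a i k < a i k + L i k by linarith [hL i k])
        (fun k => show a j k < a j k + L j k by linarith [hL j k])).1 (hdisj i j hij)
  -- minimize total sum
  have hfcont : Continuous fun x : Fin n → Fin 3 → ℝ => ∑ i, ∑ k, x i k :=
    continuous_finset_sum _ fun i _ => continuous_finset_sum _ fun k _ => hcontap i k
  obtain ⟨x, hxF, hxmin⟩ := hFcomp.exists_isMinOn ⟨a, haF⟩ hfcont.continuousOn
  have hx0 : ∀ i k, 0 ≤ x i k := fun i k => (hxF.1 i k).1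
  have hxa : ∀ i k, x i k ≤ a i k := fun i k => (hxF.1 i k).2
  have hxsep : ∀ i j, i ≠ j → ∃ k, x i k + L i k ≤ x j k ∨ x j k + L j k ≤ x i k :=
    hxF.2
  -- support property at the minimizer
  have hsupp : ∀ i k, x i k = 0 ∨ ∃ j, j ≠ i ∧ x j k + L j k = x i k := by
    intro i k
    by_contra hc
    push_neg at hc
    obtain ⟨h0, hns⟩ := hc
    have hpos : 0 < x i k := lt_of_le_of_ne (hx0 i k) (Ne.symm h0)
    set g : Fin n → ℝ := fun j =>
      if x j k + L j k < x i k then x i k - (x j k + L j k) else x i k with hg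
    have hgj : ∀ j, g j = if x j k + L j k < x i k then x i k - (x j k + L j k) else x i k :=
      fun j => rfl
    have hune : (Finset.univ : Finset (Fin n)).Nonempty := Finset.univ_nonempty
    set ε : ℝ := Finset.univ.inf' hune g with hε
    have hε0 : 0 < ε := by
      rw [hε, Finset.lt_inf'_iff]
      intro j _
      rw [hgj]
      split
      · next hlt => linarith
      · exact hpos
    have hεle : ε ≤ x i k := by
      have h1 : ε ≤ g i := Finset.inf'_le _ (Finset.mem_univ i)
      have h2 : g i = x i k := by
        rw [hgj, if_neg (by linarith [hL i k])]
      linarith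
    have hεgap : ∀ j, j ≠ i → x j k + L j k ≤ x i k → x j k + L j k ≤ x i k - ε := by
      intro j hji hle
      have hlt : x j k + L j k < x i k := lt_of_le_of_ne hle (hns j hji)
      have h1 : ε ≤ g j := Finset.inf'_le _ (Finset.mem_univ j)
      have h2 : g j = x i k - (x j k + L j k) := by
        rw [hgj, if_pos hlt]
      linarith
    set y : Fin n → Fin 3 → ℝ :=
      fun j m => if j = i ∧ m = k then x i k - ε else x j m with hy
    have hyik : y i k = x i k - ε := by rw [hy]; simp
    have hyne : ∀ j m, ¬(j = i ∧ m = k) → y j m = x j m := by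
      intro j m h; rw [hy]; simp only; rw [if_neg h]
    have hyle : ∀ j m, y j m ≤ x j m := by
      intro j m
      by_cases h : j = i ∧ m = k
      · obtain ⟨h1, h2⟩ := h; subst h1; subst h2; rw [hyik]; linarith
      · rw [hyne j m h]
    have hyF : y ∈ F := by
      constructor
      · intro j m
        by_cases h : j = i ∧ m = k
        · obtain ⟨h1, h2⟩ := h; subst h1; subst h2
          rw [hyik]
          exact ⟨by linarith, by linarith [hxa j m]⟩
        · rw [hyne j m h]; exact hxF.1 j m
      · intro p q hpq
        obtain ⟨m, hm⟩ := hxsep p q hpq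
        refine ⟨m, ?_⟩
        have hstep : ∀ p q, p ≠ q → x p m + L p m ≤ x q m → y p m + L p m ≤ y q m := by
          intro p q hpq' hle
          have h1 : y p m ≤ x p m := hyle p m
          by_cases h : q = i ∧ m = k
          · obtain ⟨h2, h3⟩ := h
            have hpi : p ≠ i := fun hc => hpq' (hc.trans h2.symm)
            have hle' : x p k + L p k ≤ x i k := by rw [h2, h3] at hle; exact hle
            have hyq : y q m = x i k - ε := by rw [h2, h3, hyik]
            rw [hyq, hyne p m (fun hc => hpi hc.1), h3]
            exact hεgap p hpi hle'
          · rw [hyne q m h]; linarith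
        rcases hm with hm | hm
        · exact Or.inl (hstep p q hpq hm)
        · exact Or.inr (hstep q p (Ne.symm hpq) hm)
    -- strict decrease of the objective
    have hsum : ∑ i', ∑ k', y i' k' < ∑ i', ∑ k', x i' k' := by
      have hrow : ∀ j, ∑ m, y j m = (∑ m, x j m) - (if j = i then ε else 0) := by
        intro j
        by_cases h : j = i
        · subst h
          have : ∀ m, y j m = x j m - (if m = k then ε else 0) := by
            intro m
            by_cases hm : m = k
            · subst hm; rw [hyik]; simp
            · rw [hyne j m (by tauto)]; simp [hm]
          simp only [this]
          rw [Finset.sum_sub_distrib, Finset.sum_ite_eq' Finset.univ k fun _ => ε]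
          simp
        · have : ∀ m, y j m = x j m := fun m => hyne j m (by tauto)
          simp [this, h]
      simp only [hrow]
      rw [Finset.sum_sub_distrib, Finset.sum_ite_eq' Finset.univ i fun _ => ε]
      simp only [Finset.mem_univ, if_true]
      linarith
    have := isMinOn_iff.1 hxmin y hyF
    linarith
  -- subset-sum structure, by strong induction on the number of smaller coordinates
  have hsum : ∀ (k : Fin 3) (c : ℕ) (i : Fin n),
      (Finset.univ.filter fun m => x m k < x i k).card ≤ c →
      ∃ S : Finset (Fin n), (∀ m ∈ S, x m k < x i k) ∧ x i k = ∑ j ∈ S, L j k := by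
    intro k c
    induction c with
    | zero =>
      intro i hc
      rcases hsupp i k with h0 | ⟨j, hji, hj⟩
      · exact ⟨∅, by simp, by simp [h0]⟩
      · exfalso
        have hjlt : x j k < x i k := by linarith [hL j k]
        have : j ∈ Finset.univ.filter fun m => x m k < x i k := by
          simp [hjlt]
        have := Finset.card_pos.2 ⟨j, this⟩
        omega
    | succ c ih =>
      intro i hc
      rcases hsupp i k with h0 | ⟨j, hji, hj⟩
      · exact ⟨∅, by simp, by simp [h0]⟩
      · have hjlt : x j k < x i k := by linarith [hL j k]
        have hjmem : j ∈ Finset.univ.filter fun m => x m k < x i k := by simp [hjlt]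
        have hcard : (Finset.univ.filter fun m => x m k < x j k).card ≤ c := by
          have hsub : (Finset.univ.filter fun m => x m k < x j k) ⊆
              (Finset.univ.filter fun m => x m k < x i k).erase j := by
            intro m hm
            simp only [Finset.mem_filter, Finset.mem_univ, true_and] at hm
            rw [Finset.mem_erase]
            refine ⟨?_, by simp only [Finset.mem_filter, Finset.mem_univ, true_and]; linarith⟩
            intro h; subst h; linarith
          have := Finset.card_le_card hsub
          rw [Finset.card_erase_of_mem hjmem] at this
          omega
        obtain ⟨S, hS1, hS2⟩ := ih j hcard
        have hjS : j ∉ S := fun h => lt_irrefl _ (hS1 j h)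
        refine ⟨insert j S, ?_, ?_⟩
        · intro m hm
          rcases Finset.mem_insert.1 hm with h | h
          · subst h; exact hjlt
          · linarith [hS1 m h]
        · rw [Finset.sum_insert hjS]
          linarith
  refine ⟨x, fun i k => ⟨hx0 i k, hxa i k⟩, ?_, ?_, ?_⟩
  · intro i p hp m _
    have h1 := hp m (Set.mem_univ m)
    exact ⟨by linarith [h1.1, hx0 i m], by linarith [h1.2, hxa i m, haD i m]⟩
  · intro i j hij
    exact (box_disjoint_iff' (x i) (fun k => x i k + L i k) (x j)
      (fun k => x j k + L j k)
      (fun k => show x i k < x i k + L i k by linarith [hL i k])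
      (fun k => show x j k < x j k + L j k by linarith [hL j k])).2 (hxsep i j hij)
  · intro i k
    obtain ⟨S, h1, h2⟩ := hsum k _ i le_rfl
    exact ⟨S, fun h => lt_irrefl _ (h1 i h), h2⟩
end

section
/- Let n ≥ 1, let c > 0, let l : Fin n → ℝ be such that each l i is a positive integer multiple of c, let D ≥ 0, and let x : Fin n → ℝ satisfy 0 ≤ x i and x i + l i ≤ D for each i, with the open intervals (x i, x i + l i) pairwise disjoint for distinct indices. Then there exists x' : Fin n → ℝ such that 0 ≤ x' i ≤ x i for each i, the open intervals (x' i, x' i + l i) are pairwise disjoint for distinct indices, x' i + l i ≤ D for each i, and each x' i is a nonnegative integer multiple of c. -/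
theorem gcd_discretisation (n : ℕ) (hn : 1 ≤ n) (c : ℝ) (hc : 0 < c)
    (l : Fin n → ℝ) (hl : ∀ i, ∃ m : ℕ, 0 < m ∧ l i = (m : ℝ) * c)
    (D : ℝ) (hD : 0 ≤ D) (x : Fin n → ℝ)
    (hx0 : ∀ i, 0 ≤ x i) (hxD : ∀ i, x i + l i ≤ D)
    (hdisj : ∀ i j, i ≠ j →
      Disjoint (Set.Ioo (x i) (x i + l i)) (Set.Ioo (x j) (x j + l j))) :
    ∃ x' : Fin n → ℝ,
      (∀ i, 0 ≤ x' i ∧ x' i ≤ x i) ∧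
      (∀ i j, i ≠ j →
        Disjoint (Set.Ioo (x' i) (x' i + l i)) (Set.Ioo (x' j) (x' j + l j))) ∧
      (∀ i, x' i + l i ≤ D) ∧
      (∀ i, ∃ m : ℕ, x' i = (m : ℝ) * c) := by
  set x' : Fin n → ℝ := fun i => c * ⌊x i / c⌋ with hx'
  have hfl0 : ∀ i, 0 ≤ (⌊x i / c⌋ : ℝ) := by
    intro i
    exact_mod_cast Int.floor_nonneg.2 (div_nonneg (hx0 i) hc.le)
  have hle : ∀ i, x' i ≤ x i := by
    intro i
    have := Int.floor_le (x i / c)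
    calc c * ⌊x i / c⌋ ≤ c * (x i / c) := by
          exact mul_le_mul_of_nonneg_left this hc.le
      _ = x i := by field_simp
  have hnn : ∀ i, 0 ≤ x' i := fun i => mul_nonneg hc.le (hfl0 i)
  -- key: if x i + l i ≤ x j then x' i + l i ≤ x' j
  have key : ∀ i j, x i + l i ≤ x j → x' i + l i ≤ x' j := by
    intro i j hij
    obtain ⟨m, hm, hml⟩ := hl i
    have h1 : (x i + l i) / c = x i / c + (m : ℤ) := by
      rw [hml]; field_simp; push_cast; ring
    have h2 : ⌊(x i + l i) / c⌋ = ⌊x i / c⌋ + m := by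
      rw [h1, Int.floor_add_intCast]
    have h3 : ⌊(x i + l i) / c⌋ ≤ ⌊x j / c⌋ :=
      Int.floor_mono (by exact div_le_div_of_nonneg_right hij hc.le)
    have h3' : (⌊x i / c⌋ : ℝ) + m ≤ ⌊x j / c⌋ := by
      rw [h2] at h3; exact_mod_cast h3
    calc x' i + l i = c * ((⌊x i / c⌋ : ℝ) + m) := by rw [hml]; ring
      _ ≤ c * ⌊x j / c⌋ := mul_le_mul_of_nonneg_left h3' hc.le
      _ = x' j := rfl
  -- original intervals are ordered
  have hord : ∀ i j, i ≠ j → x i + l i ≤ x j ∨ x j + l j ≤ x i := by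
    intro i j hij
    by_contra h
    push_neg at h
    obtain ⟨h1, h2⟩ := h
    obtain ⟨mi, hmi, hmli⟩ := hl i
    obtain ⟨mj, hmj, hmlj⟩ := hl j
    have hli : 0 < l i := by
      rw [hmli]; positivity
    have hlj : 0 < l j := by
      rw [hmlj]; positivity
    set t := (max (x i) (x j) + min (x i + l i) (x j + l j)) / 2 with ht
    have hmaxmin : max (x i) (x j) < min (x i + l i) (x j + l j) := by
      rcases max_cases (x i) (x j) with ⟨he, _⟩ | ⟨he, _⟩ <;>
        rw [he, lt_min_iff] <;> constructor <;> linarith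
    have hti : t ∈ Set.Ioo (x i) (x i + l i) := by
      constructor
      · have := le_max_left (x i) (x j); simp only [ht]; linarith
      · have := min_le_left (x i + l i) (x j + l j); simp only [ht]; linarith
    have htj : t ∈ Set.Ioo (x j) (x j + l j) := by
      constructor
      · have := le_max_right (x i) (x j); simp only [ht]; linarith
      · have := min_le_right (x i + l i) (x j + l j); simp only [ht]; linarith
    exact (hdisj i j hij).ne_of_mem hti htj rfl
  refine ⟨x', fun i => ⟨hnn i, hle i⟩, ?_, fun i => le_trans (by linarith [hle i]) (hxD i), ?_⟩
  · intro i j hij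
    rcases hord i j hij with h | h
    · have := key i j h
      rw [Set.disjoint_left]
      rintro t ⟨_, ht2⟩ ⟨ht3, _⟩
      linarith
    · have := key j i h
      rw [Set.disjoint_left]
      rintro t ⟨ht1, _⟩ ⟨_, ht4⟩
      linarith
  · intro i
    exact ⟨(⌊x i / c⌋).toNat, by
      rw [hx']
      have : ((⌊x i / c⌋).toNat : ℝ) = (⌊x i / c⌋ : ℝ) := by
        exact_mod_cast Int.toNat_of_nonneg (Int.floor_nonneg.2 (div_nonneg (hx0 i) hc.le))
      rw [this]; ring⟩
end
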